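/- Fix λ > 0, γ ≥ 0, ε > 0, data points x₁,…,x_n ∈ ℝ^p, a finite index set E with positive weights ω_l and vectors c_l ∈ ℝ^n for l ∈ E, and positive constants ν₁,…,ν_p. Let W := Σ_{l∈E} ω_l, set μ := ε/(2λW) and L := 1 + 2λW/μ = 1 + 4λ²W²/ε. Define f(U) := (1/2) Σ_{i=1}^n ‖x_i − u_i‖₂² + λ Σ_{l∈E} ω_l ‖U c_l‖₂ + γ Σ_{k=1}^p ν_k ‖a_k‖₂ and f̃_μ(U) := (1/2) Σ_{i=1}^n ‖x_i − u_i‖₂² + λ Σ_{l∈E} ω_l g_μ(U c_l) + γ Σ_{k=1}^p ν_k ‖a_k‖₂, where g_μ(z) := sup{⟨α,z⟩ − (μ/2)‖α‖₂² : ‖α‖₂ ≤ 1}. Let U* be a global minimizer of f, let U⁰ ∈ ℝ^{p×n}, let t ≥ 1, and suppose U^t ∈ ℝ^{p×n} satisfies f̃_μ(U^t) − inf_{U} f̃_μ(U) ≤ 2L‖U* − U⁰‖_F²/t². Then f(U^t) − f(U*) ≤ ε/2 + (2‖U* − U⁰‖_F²/t²)(1 + 4λ²W²/ε). -/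

import Mathlib

/-- Euclidean norm of a vector in `ℝ^m`. -/
noncomputable def enormE {m : ℕ} (x : Fin m → ℝ) : ℝ := Real.sqrt (∑ i, x i ^ 2)

/-- Frobenius norm of a `p × n` real matrix. -/
noncomputable def frob {p n : ℕ} (U : Fin p → Fin n → ℝ) : ℝ :=
  Real.sqrt (∑ i, ∑ j, U i j ^ 2)

/-- Matrix-vector product. -/
noncomputable def mulVecF {p n : ℕ} (U : Fin p → Fin n → ℝ) (c : Fin n → ℝ) : Fin p → ℝ :=
  fun i => ∑ j, U i j * c j

/-- The smoothed norm `g_μ(z) = sup { ⟨α, z⟩ - (μ/2)‖α‖₂² : ‖α‖₂ ≤ 1 }`. -/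
noncomputable def gsm {m : ℕ} (μ : ℝ) (z : Fin m → ℝ) : ℝ :=
  sSup ((fun α : Fin m → ℝ => (∑ i, α i * z i) - μ / 2 * enormE α ^ 2) ''
    {α : Fin m → ℝ | enormE α ≤ 1})

/-- The sparse convex clustering objective `f`. -/
noncomputable def objf {p n : ℕ} {ι : Type*} (lam γ : ℝ) (x : Fin n → Fin p → ℝ)
    (E : Finset ι) (ω : ι → ℝ) (c : ι → Fin n → ℝ) (ν : Fin p → ℝ)
    (U : Fin p → Fin n → ℝ) : ℝ :=
  (1 / 2) * ∑ i, enormE (fun k => x i k - U k i) ^ 2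
    + lam * ∑ l ∈ E, ω l * enormE (mulVecF U (c l))
    + γ * ∑ k, ν k * enormE (U k)

/-- The smoothed sparse convex clustering objective `f̃_μ`. -/
noncomputable def objft {p n : ℕ} {ι : Type*} (lam γ μ : ℝ) (x : Fin n → Fin p → ℝ)
    (E : Finset ι) (ω : ι → ℝ) (c : ι → Fin n → ℝ) (ν : Fin p → ℝ)
    (U : Fin p → Fin n → ℝ) : ℝ :=
  (1 / 2) * ∑ i, enormE (fun k => x i k - U k i) ^ 2
    + lam * ∑ l ∈ E, ω l * gsm μ (mulVecF U (c l))
    + γ * ∑ k, ν k * enormE (U k)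

section helpers

variable {m : ℕ}

lemma enorm_nonneg' (z : Fin m → ℝ) : 0 ≤ enormE z := Real.sqrt_nonneg _

lemma enorm_sq (z : Fin m → ℝ) : enormE z ^ 2 = ∑ i, z i ^ 2 :=
  Real.sq_sqrt (Finset.sum_nonneg fun _ _ => sq_nonneg _)

lemma enormE_zero : enormE (0 : Fin m → ℝ) = 0 := by
  simp [enormE]

lemma gsm_nonempty (z : Fin m → ℝ) :
    ((fun α : Fin m → ℝ => (∑ i, α i * z i) - μ / 2 * enormE α ^ 2) ''
      {α : Fin m → ℝ | enormE α ≤ 1}).Nonempty := by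
  refine ⟨_, ⟨0, ?_, rfl⟩⟩
  simp [enormE_zero]

lemma cs (α z : Fin m → ℝ) : (∑ i, α i * z i) ≤ enormE α * enormE z := by
  simpa [enormE] using Real.sum_mul_le_sqrt_mul_sqrt Finset.univ α z

lemma gsm_bddAbove {μ : ℝ} (hμ : 0 ≤ μ) (z : Fin m → ℝ) :
    BddAbove ((fun α : Fin m → ℝ => (∑ i, α i * z i) - μ / 2 * enormE α ^ 2) ''
      {α : Fin m → ℝ | enormE α ≤ 1}) := by
  refine ⟨enormE z, ?_⟩
  rintro y ⟨α, hα, rfl⟩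
  have h1 : (∑ i, α i * z i) ≤ enormE α * enormE z := cs α z
  have h2 : enormE α * enormE z ≤ 1 * enormE z :=
    mul_le_mul_of_nonneg_right hα (enorm_nonneg' z)
  have h3 : 0 ≤ μ / 2 * enormE α ^ 2 := by positivity
  simp only [one_mul] at h2
  linarith

lemma gsm_nonneg {μ : ℝ} (hμ : 0 ≤ μ) (z : Fin m → ℝ) : 0 ≤ gsm μ z := by
  have := le_csSup (gsm_bddAbove hμ z) (show _ ∈ _ from ⟨0, by simp [enormE_zero], rfl⟩)
  unfold gsm
  simpa [enormE_zero] using this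

lemma gsm_le_enorm {μ : ℝ} (hμ : 0 ≤ μ) (z : Fin m → ℝ) : gsm μ z ≤ enormE z := by
  refine csSup_le (gsm_nonempty z) ?_
  rintro y ⟨α, hα, rfl⟩
  have h1 : (∑ i, α i * z i) ≤ enormE α * enormE z := cs α z
  have h2 : enormE α * enormE z ≤ 1 * enormE z :=
    mul_le_mul_of_nonneg_right hα (enorm_nonneg' z)
  have h3 : 0 ≤ μ / 2 * enormE α ^ 2 := by positivity
  simp only [one_mul] at h2
  linarith

lemma enorm_le_gsm {μ : ℝ} (hμ : 0 ≤ μ) (z : Fin m → ℝ) : enormE z ≤ gsm μ z + μ / 2 := by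
  by_cases hz : enormE z = 0
  · have := gsm_nonneg hμ z
    linarith
  · set r := enormE z with hr
    have hr0 : 0 < r := lt_of_le_of_ne (enorm_nonneg' z) (Ne.symm hz)
    set α : Fin m → ℝ := fun i => z i / r with hαdef
    have hsum : ∑ i, α i ^ 2 = 1 := by
      simp only [hαdef, div_pow, ← Finset.sum_div]
      rw [← enorm_sq z, ← hr]
      field_simp
    have hαn : enormE α = 1 := by
      simp [enormE, hsum]
    have hdot : ∑ i, α i * z i = r := by
      simp only [hαdef, div_mul_eq_mul_div, ← Finset.sum_div]
      have h4 : ∑ i, z i * z i = r ^ 2 := by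
        have : ∀ i : Fin m, z i * z i = z i ^ 2 := fun i => (sq (z i)).symm
        rw [Finset.sum_congr rfl fun i _ => this i, ← enorm_sq z]
      rw [h4]; field_simp
    have hmem : (r - μ / 2) ∈ ((fun α : Fin m → ℝ =>
        (∑ i, α i * z i) - μ / 2 * enormE α ^ 2) ''
        {α : Fin m → ℝ | enormE α ≤ 1}) := by
      refine ⟨α, le_of_eq hαn, ?_⟩
      simp only
      rw [hdot, hαn]; ring
    have h5 := le_csSup (gsm_bddAbove hμ z) hmem
    unfold gsm
    linarith

end helpers

/-- Convergence bound of the smoothing proximal gradient iterate. -/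
theorem stmt8 {p n : ℕ} {ι : Type*} (E : Finset ι) (lam γ ε : ℝ)
    (hlam : 0 < lam) (hγ : 0 ≤ γ) (hε : 0 < ε)
    (x : Fin n → Fin p → ℝ) (ω : ι → ℝ) (hω : ∀ l ∈ E, 0 < ω l) (c : ι → Fin n → ℝ)
    (ν : Fin p → ℝ) (hν : ∀ k, 0 < ν k)
    (W μ L : ℝ) (hW : W = ∑ l ∈ E, ω l) (hμ : μ = ε / (2 * lam * W))
    (hL : L = 1 + 4 * lam ^ 2 * W ^ 2 / ε)
    (Ustar U0 Ut : Fin p → Fin n → ℝ)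
    (hUstar : ∀ V : Fin p → Fin n → ℝ, objf lam γ x E ω c ν Ustar ≤ objf lam γ x E ω c ν V)
    (t : ℝ) (ht : 1 ≤ t)
    (hrate : objft lam γ μ x E ω c ν Ut - (⨅ V : Fin p → Fin n → ℝ, objft lam γ μ x E ω c ν V)
      ≤ 2 * L * frob (Ustar - U0) ^ 2 / t ^ 2) :
    objf lam γ x E ω c ν Ut - objf lam γ x E ω c ν Ustar
      ≤ ε / 2 + (2 * frob (Ustar - U0) ^ 2 / t ^ 2) * (1 + 4 * lam ^ 2 * W ^ 2 / ε) := by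

  have hW0 : 0 ≤ W := hW ▸ Finset.sum_nonneg fun l hl => (hω l hl).le
  have hμ0 : 0 ≤ μ := hμ ▸ div_nonneg hε.le (by positivity)
  -- bounded below: objft V ≥ 0
  have hbdd : BddBelow (Set.range (objft lam γ μ x E ω c ν)) := by
    refine ⟨0, ?_⟩
    rintro y ⟨V, rfl⟩
    have h1 : 0 ≤ (1 / 2 : ℝ) * ∑ i, enormE (fun k => x i k - V k i) ^ 2 := by
      positivity
    have h2 : 0 ≤ lam * ∑ l ∈ E, ω l * gsm μ (mulVecF V (c l)) := by
      refine mul_nonneg hlam.le (Finset.sum_nonneg fun l hl =>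
        mul_nonneg (hω l hl).le (gsm_nonneg hμ0 _))
    have h3 : 0 ≤ γ * ∑ k, ν k * enormE (V k) := by
      refine mul_nonneg hγ (Finset.sum_nonneg fun k _ =>
        mul_nonneg (hν k).le (enorm_nonneg' _))
    unfold objft
    linarith
  have hinf : (⨅ V : Fin p → Fin n → ℝ, objft lam γ μ x E ω c ν V)
      ≤ objft lam γ μ x E ω c ν Ustar := ciInf_le hbdd Ustar
  -- objft Ustar ≤ objf Ustar
  have h1 : objft lam γ μ x E ω c ν Ustar ≤ objf lam γ x E ω c ν Ustar := by
    unfold objf objft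
    have : ∑ l ∈ E, ω l * gsm μ (mulVecF Ustar (c l))
        ≤ ∑ l ∈ E, ω l * enormE (mulVecF Ustar (c l)) :=
      Finset.sum_le_sum fun l hl =>
        mul_le_mul_of_nonneg_left (gsm_le_enorm hμ0 _) (hω l hl).le
    nlinarith [mul_le_mul_of_nonneg_left this hlam.le]
  -- objf Ut ≤ objft Ut + lam * W * (μ/2)
  have h2 : objf lam γ x E ω c ν Ut ≤ objft lam γ μ x E ω c ν Ut + lam * W * (μ / 2) := by
    unfold objf objft
    have hsum : ∑ l ∈ E, ω l * enormE (mulVecF Ut (c l))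
        ≤ ∑ l ∈ E, ω l * (gsm μ (mulVecF Ut (c l)) + μ / 2) :=
      Finset.sum_le_sum fun l hl =>
        mul_le_mul_of_nonneg_left (enorm_le_gsm hμ0 _) (hω l hl).le
    have hexp : ∑ l ∈ E, ω l * (gsm μ (mulVecF Ut (c l)) + μ / 2)
        = (∑ l ∈ E, ω l * gsm μ (mulVecF Ut (c l))) + W * (μ / 2) := by
      rw [hW, Finset.sum_mul]
      rw [← Finset.sum_add_distrib]
      congr 1; ext l; ring
    rw [hexp] at hsum
    nlinarith [mul_le_mul_of_nonneg_left hsum hlam.le]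
  -- lam * W * (μ/2) ≤ ε/2
  have hterm : lam * W * (μ / 2) ≤ ε / 2 := by
    rcases eq_or_lt_of_le hW0 with hWeq | hWpos
    · rw [← hWeq]; simp; positivity
    · rw [hμ]
      have : lam * W * (ε / (2 * lam * W) / 2) = ε / 4 := by
        field_simp; ring
      rw [this]; linarith
  have hrw : 2 * L * frob (Ustar - U0) ^ 2 / t ^ 2
      = (2 * frob (Ustar - U0) ^ 2 / t ^ 2) * (1 + 4 * lam ^ 2 * W ^ 2 / ε) := by
    rw [hL]; ring
  rw [hrw] at hrate
  linarith
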